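/- Let G be a Berge graph with a connected 2-join (X1, X2) with split (X1,X2,A1,B1,A2,B2). Then all induced paths with one end in A1, one end in B1, and no interior vertex in A1 ∪ B1, as well as all induced paths with one end in A2, one end in B2, and no interior vertex in A2 ∪ B2, have lengths of the same parity. -/

import Mathlib

open SimpleGraph

universe u

namespace BSP

variable {V : Type*}

/-- A walk is induced: any two adjacent vertices of its support are consecutive on it. -/
def IsInducedWalk (G : SimpleGraph V) {u v : V} (p : G.Walk u v) : Prop :=
  ∀ x ∈ p.support, ∀ y ∈ p.support, G.Adj x y → s(x, y) ∈ p.edges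

/-- An induced path. -/
def IsInducedPath (G : SimpleGraph V) {u v : V} (p : G.Walk u v) : Prop :=
  p.IsPath ∧ IsInducedWalk G p

/-- An induced cycle. -/
def IsInducedCycle (G : SimpleGraph V) {u : V} (p : G.Walk u u) : Prop :=
  p.IsCycle ∧ IsInducedWalk G p

/-- `G` has an odd hole: an induced odd cycle of length at least 5. -/
def HasOddHole (G : SimpleGraph V) : Prop :=
  ∃ (u : V) (p : G.Walk u u), IsInducedCycle G p ∧ Odd p.length ∧ 5 ≤ p.length

/-- A graph is Berge if neither it nor its complement has an odd hole. -/
def Berge (G : SimpleGraph V) : Prop := ¬ HasOddHole G ∧ ¬ HasOddHole Gᶜ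

/-- `x` is an interior vertex of the walk `p`. -/
def Interior {G : SimpleGraph V} {u v : V} (p : G.Walk u v) (x : V) : Prop :=
  x ∈ p.support ∧ x ≠ u ∧ x ≠ v

/-- A skew partition `(A, B)` of `G`. -/
def IsSkewPartition (G : SimpleGraph V) (A B : Set V) : Prop :=
  A.Nonempty ∧ B.Nonempty ∧ Disjoint A B ∧ A ∪ B = Set.univ ∧
  ¬ (G.induce A).Connected ∧ ¬ ((Gᶜ).induce B).Connected

/-- A balanced skew partition. -/
def IsBalancedSkewPartition (G : SimpleGraph V) (A B : Set V) : Prop :=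
  IsSkewPartition G A B ∧
  (∀ (x y : V) (p : G.Walk x y), IsInducedPath G p → 2 ≤ p.length →
     x ∈ B → y ∈ B → (∀ z, Interior p z → z ∈ A) → Even p.length) ∧
  (∀ (x y : V) (q : (Gᶜ).Walk x y), IsInducedPath Gᶜ q → 2 ≤ q.length →
     x ∈ A → y ∈ A → (∀ z, Interior q z → z ∈ B) → Even q.length)

def HasBalancedSkewPartition (G : SimpleGraph V) : Prop :=
  ∃ A B : Set V, IsBalancedSkewPartition G A B

def IsSkewCutset (G : SimpleGraph V) (B : Set V) : Prop :=
  IsSkewPartition G Bᶜ B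

def IsBalancedSkewCutset (G : SimpleGraph V) (B : Set V) : Prop :=
  IsBalancedSkewPartition G Bᶜ B

/-- `C` is a cutset of `G`. -/
def IsCutset (G : SimpleGraph V) (C : Set V) : Prop :=
  ¬ (G.induce (Cᶜ : Set V)).Connected

/-- A star: a set with a vertex adjacent to all the others in it. -/
def IsStar (G : SimpleGraph V) (B : Set V) : Prop :=
  ∃ x ∈ B, ∀ y ∈ B, y ≠ x → G.Adj x y

def HasStarCutset (G : SimpleGraph V) : Prop :=
  ∃ B : Set V, IsStar G B ∧ IsCutset G B

/-- A 2-join of `G` with split `(X1, X2, A1, B1, A2, B2)`. -/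
def IsTwoJoinSplit (G : SimpleGraph V) (X1 X2 A1 B1 A2 B2 : Set V) : Prop :=
  Disjoint X1 X2 ∧ X1 ∪ X2 = Set.univ ∧
  A1 ⊆ X1 ∧ B1 ⊆ X1 ∧ A2 ⊆ X2 ∧ B2 ⊆ X2 ∧
  Disjoint A1 B1 ∧ Disjoint A2 B2 ∧
  A1.Nonempty ∧ B1.Nonempty ∧ A2.Nonempty ∧ B2.Nonempty ∧
  (∀ a1 ∈ A1, ∀ a2 ∈ A2, G.Adj a1 a2) ∧
  (∀ b1 ∈ B1, ∀ b2 ∈ B2, G.Adj b1 b2) ∧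
  (∀ x ∈ X1, ∀ y ∈ X2, G.Adj x y → (x ∈ A1 ∧ y ∈ A2) ∨ (x ∈ B1 ∧ y ∈ B2))

/-- Reachability inside a set of vertices. -/
def ReachIn (G : SimpleGraph V) (S : Set V) (u v : V) : Prop :=
  ∃ p : G.Walk u v, ∀ x ∈ p.support, x ∈ S

/-- Every component of `G[X]` meets both `A` and `B`. -/
def SideConnected (G : SimpleGraph V) (X A B : Set V) : Prop :=
  ∀ v ∈ X, (∃ a ∈ A, ReachIn G X v a) ∧ (∃ b ∈ B, ReachIn G X v b)

def IsConnectedTwoJoin (G : SimpleGraph V) (X1 X2 A1 B1 A2 B2 : Set V) : Prop :=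
  IsTwoJoinSplit G X1 X2 A1 B1 A2 B2 ∧
  SideConnected G X1 A1 B1 ∧ SideConnected G X2 A2 B2

/-- `X` has at least 3 vertices and is not a path of length 2 from `A` to `B`
with interior in `X \ (A ∪ B)`. -/
def SideSubstantial (G : SimpleGraph V) (X A B : Set V) : Prop :=
  3 ≤ X.ncard ∧
  ¬ ∃ a ∈ A, ∃ b ∈ B, ∃ c ∈ X \ (A ∪ B),
      X = {a, c, b} ∧ G.Adj a c ∧ G.Adj c b ∧ ¬ G.Adj a b

def IsSubstantialTwoJoin (G : SimpleGraph V) (X1 X2 A1 B1 A2 B2 : Set V) : Prop :=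
  IsTwoJoinSplit G X1 X2 A1 B1 A2 B2 ∧
  SideSubstantial G X1 A1 B1 ∧ SideSubstantial G X2 A2 B2

def IsProperTwoJoin (G : SimpleGraph V) (X1 X2 A1 B1 A2 B2 : Set V) : Prop :=
  IsConnectedTwoJoin G X1 X2 A1 B1 A2 B2 ∧
  SideSubstantial G X1 A1 B1 ∧ SideSubstantial G X2 A2 B2

/-- A degenerate 2-join. -/
def IsDegenerate (G : SimpleGraph V) (X1 X2 A1 B1 A2 B2 : Set V) : Prop :=
  (∃ v ∈ A1, ∀ w ∈ X1 \ A1, ¬ G.Adj v w) ∨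
  (∃ v ∈ B1, ∀ w ∈ X1 \ B1, ¬ G.Adj v w) ∨
  (∃ v ∈ A2, ∀ w ∈ X2 \ A2, ¬ G.Adj v w) ∨
  (∃ v ∈ B2, ∀ w ∈ X2 \ B2, ¬ G.Adj v w) ∨
  IsSkewCutset G (A1 ∪ A2) ∨ IsSkewCutset G (B1 ∪ B2) ∨
  ¬ (SideConnected G X1 A1 B1 ∧ SideConnected G X2 A2 B2) ∨
  (∃ v ∈ A1, ∀ w ∈ B1, G.Adj v w) ∨ (∃ v ∈ B1, ∀ w ∈ A1, G.Adj v w) ∨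
  (∃ v ∈ A2, ∀ w ∈ B2, G.Adj v w) ∨ (∃ v ∈ B2, ∀ w ∈ A2, G.Adj v w) ∨
  (∃ v ∈ X1 \ (A1 ∪ B1), ∀ w ∈ A1 ∪ B1, G.Adj v w) ∨
  (∃ v ∈ X2 \ (A2 ∪ B2), ∀ w ∈ A2 ∪ B2, G.Adj v w)

/-- An induced path from `A` to `B` with no interior vertex in `A ∪ B`. -/
def CrossPath (G : SimpleGraph V) (A B : Set V) {u v : V} (p : G.Walk u v) : Prop :=
  IsInducedPath G p ∧ u ∈ A ∧ v ∈ B ∧ ∀ x, Interior p x → x ∉ A ∪ B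

/-- An induced path of length at least 2 with both ends in `S` and no interior vertex in `S`. -/
def OutgoingPath (G : SimpleGraph V) (S : Set V) {u v : V} (p : G.Walk u v) : Prop :=
  IsInducedPath G p ∧ 2 ≤ p.length ∧ u ∈ S ∧ v ∈ S ∧ ∀ x, Interior p x → x ∉ S

def claw : SimpleGraph (Fin 1 ⊕ Fin 3) := completeBipartiteGraph (Fin 1) (Fin 3)

def diamond : SimpleGraph (Fin 4) := (⊤ : SimpleGraph (Fin 4)).deleteEdges {s(0, 1)}

def ClawFree (G : SimpleGraph V) : Prop := IsEmpty (claw ↪g G)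

def DiamondFree (G : SimpleGraph V) : Prop := IsEmpty (diamond ↪g G)

def IsLineGraphOfBipartite {V : Type u} (G : SimpleGraph V) : Prop :=
  ∃ (W : Type u) (H : SimpleGraph W), H.Colorable 2 ∧ Nonempty (G ≃g H.lineGraph)

/-- Double split graph structure. -/
structure IsDoubleSplit (G : SimpleGraph V) (m n : ℕ)
    (a b : Fin m → V) (c d : Fin n → V) : Prop where
  hm : 2 ≤ m
  hn : 2 ≤ n
  inj : Function.Injective (Sum.elim (Sum.elim a b) (Sum.elim c d))
  cover : Set.range a ∪ Set.range b ∪ Set.range c ∪ Set.range d = Set.univ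
  hab : ∀ i, G.Adj (a i) (b i)
  habne : ∀ i i', i ≠ i' →
    ¬ G.Adj (a i) (a i') ∧ ¬ G.Adj (a i) (b i') ∧ ¬ G.Adj (b i) (b i')
  hcd : ∀ j, ¬ G.Adj (c j) (d j)
  hcdall : ∀ j j', j ≠ j' →
    G.Adj (c j) (c j') ∧ G.Adj (c j) (d j') ∧ G.Adj (d j) (d j')
  cross : ∀ i j,
    (G.Adj (a i) (c j) ∧ G.Adj (b i) (d j) ∧ ¬ G.Adj (a i) (d j) ∧ ¬ G.Adj (b i) (c j)) ∨
    (G.Adj (a i) (d j) ∧ G.Adj (b i) (c j) ∧ ¬ G.Adj (a i) (c j) ∧ ¬ G.Adj (b i) (d j))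

/-- Path-double split graph structure. -/
structure IsPathDoubleSplit (G : SimpleGraph V) (m n : ℕ)
    (a b : Fin m → V) (c d : Fin n → V) (E : Set V) : Prop where
  hm : 2 ≤ m
  hn : 2 ≤ n
  inj : Function.Injective (Sum.elim (Sum.elim a b) (Sum.elim c d))
  notinE : ∀ i, a i ∉ E ∧ b i ∉ E
  notinE' : ∀ j, c j ∉ E ∧ d j ∉ E
  cover : Set.range a ∪ Set.range b ∪ Set.range c ∪ Set.range d ∪ E = Set.univ
  hE : ∀ v ∈ E, (G.neighborSet v).ncard = 2 ∧
    ∃ (i : Fin m) (p : G.Walk (a i) (b i)), IsInducedPath G p ∧ Odd p.length ∧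
      (∀ x, Interior p x → x ∈ E) ∧ v ∈ p.support
  hpath : ∀ i, ∃! p : G.Walk (a i) (b i),
    IsInducedPath G p ∧ Odd p.length ∧ (∀ x, Interior p x → x ∈ E)
  habne : ∀ i i', i ≠ i' →
    ¬ G.Adj (a i) (a i') ∧ ¬ G.Adj (a i) (b i') ∧ ¬ G.Adj (b i) (b i')
  hcd : ∀ j, ¬ G.Adj (c j) (d j)
  hcdall : ∀ j j', j ≠ j' →
    G.Adj (c j) (c j') ∧ G.Adj (c j) (d j') ∧ G.Adj (d j) (d j')
  cross : ∀ i j,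
    (G.Adj (a i) (c j) ∧ G.Adj (b i) (d j) ∧ ¬ G.Adj (a i) (d j) ∧ ¬ G.Adj (b i) (c j)) ∨
    (G.Adj (a i) (d j) ∧ G.Adj (b i) (c j) ∧ ¬ G.Adj (a i) (c j) ∧ ¬ G.Adj (b i) (d j))

/-- Path-cobipartite graph. -/
def IsPathCobipartite (G : SimpleGraph V) : Prop :=
  Berge G ∧ ∃ A B P : Set V,
    Disjoint A B ∧ Disjoint A P ∧ Disjoint B P ∧ A ∪ B ∪ P = Set.univ ∧
    A.Nonempty ∧ B.Nonempty ∧ G.IsClique A ∧ G.IsClique B ∧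
    ∀ v ∈ P, (G.neighborSet v).ncard = 2 ∧
      ∃ a ∈ A, ∃ b ∈ B, ∃ p : G.Walk a b, IsInducedPath G p ∧ Odd p.length ∧
        Interior p v ∧ (∀ x, Interior p x → x ∈ P) ∧
        (∀ w, G.Adj a w → w ∈ A ∪ P) ∧ (∀ w, G.Adj b w → w ∈ B ∪ P) ∧
        (∀ (a' b' : V), a' ∈ A → b' ∈ B → ∀ p' : G.Walk a' b',
          IsInducedPath G p' → Odd p'.length → Interior p' v →
          (∀ x, Interior p' x → x ∈ P) →
          {x | x ∈ p'.support} = {x | x ∈ p.support})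

/-- `X` induces a path of `G` with one end in `A`, the other in `B` and interior
outside `A ∪ B`. -/
def PathSideOn (G : SimpleGraph V) (X A B : Set V) : Prop :=
  ∃ a ∈ A, ∃ b ∈ B, ∃ p : G.Walk a b, IsInducedPath G p ∧
    {x | x ∈ p.support} = X ∧ ∀ x, Interior p x → x ∉ A ∪ B

/-- The block of a 2-join: keep the side `X` (with attachments `A`, `B`) and replace the
other side by a path `p_0, …, p_k`, `p_0` complete to `A` and `p_k` complete to `B`. -/
def blockGraph (G : SimpleGraph V) (X A B : Set V) (k : ℕ) :
    SimpleGraph (↥X ⊕ Fin (k + 1)) where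
  Adj x y :=
    match x, y with
    | Sum.inl u, Sum.inl v => G.Adj u v
    | Sum.inl u, Sum.inr i => ((i : ℕ) = 0 ∧ (u : V) ∈ A) ∨ ((i : ℕ) = k ∧ (u : V) ∈ B)
    | Sum.inr i, Sum.inl u => ((i : ℕ) = 0 ∧ (u : V) ∈ A) ∨ ((i : ℕ) = k ∧ (u : V) ∈ B)
    | Sum.inr i, Sum.inr j => (i : ℕ) + 1 = (j : ℕ) ∨ (j : ℕ) + 1 = (i : ℕ)
  symm := ⟨by
    rintro (u | i) (v | j) h
    · exact h.symm
    · exact h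
    · exact h
    · omega⟩
  loopless := ⟨by
    rintro (u | i) h
    · exact G.loopless.irrefl _ h
    · omega⟩

/-- The graph `G'` obtained from a Bienstock graph `G` by adding two vertices
(`Sum.inr false` and `Sum.inr true`), each adjacent exactly to `u` and `s`. -/
def bienstockExt (G : SimpleGraph V) (u s : V) : SimpleGraph (V ⊕ Bool) where
  Adj x y :=
    match x, y with
    | Sum.inl p, Sum.inl q => G.Adj p q
    | Sum.inl p, Sum.inr _ => p = u ∨ p = s
    | Sum.inr _, Sum.inl q => q = u ∨ q = s
    | Sum.inr _, Sum.inr _ => False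
  symm := ⟨by
    rintro (p | i) (q | j) h
    · exact h.symm
    · exact h
    · exact h
    · exact h⟩
  loopless := ⟨by
    rintro (p | i) h
    · exact G.loopless.irrefl _ h
    · exact h⟩

end BSP

namespace BSPAux

open SimpleGraph Walk

variable {V : Type*} {G : SimpleGraph V}

lemma edge_from_start {u v z w : V} {p : G.Walk u v} (hp : p.IsPath)
    (hz : s(u, z) ∈ p.edges) (hw : s(u, w) ∈ p.edges) : z = w := by
  cases p with
  | nil => simp at hz
  | cons h t =>
    rename_i x
    have hx : ∀ y, s(u, y) ∈ (Walk.cons h t).edges → y = x := by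
      intro y hy
      rw [Walk.edges_cons, List.mem_cons] at hy
      rcases hy with hy | hy
      · rw [Sym2.eq_iff] at hy
        rcases hy with ⟨-, h2⟩ | ⟨h1, h2⟩
        · exact h2
        · exact absurd (h1 ▸ h) (G.loopless.irrefl x)
      · have hns : u ∉ t.support := by
          have := hp.support_nodup
          simp only [Walk.support_cons, List.nodup_cons] at this
          exact this.1
        exact absurd (Walk.fst_mem_support_of_mem_edges t hy) hns
    rw [hx z hz, hx w hw]

lemma edge_from_end {u v z w : V} {p : G.Walk u v} (hp : p.IsPath)
    (hz : s(v, z) ∈ p.edges) (hw : s(v, w) ∈ p.edges) : z = w := by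
  refine edge_from_start hp.reverse (p := p.reverse) ?_ ?_ <;>
    simp [Walk.edges_reverse, hz, hw]

lemma exists_eq_concat {x v : V} (t : G.Walk x v) (h : x ≠ v) :
    ∃ (y : V) (q : G.Walk x y) (h' : G.Adj y v), t = q.concat h' := by
  cases t with
  | nil => exact absurd rfl h
  | cons h t' => exact Walk.exists_cons_eq_concat _ _

lemma edge_of_length_one {x y : V} {w : G.Walk x y} (h : w.length = 1) :
    s(x, y) ∈ w.edges := by
  cases w with
  | nil => simp at h
  | cons h' w' =>
    have : w'.length = 0 := by simpa using h
    have := Walk.eq_of_length_eq_zero this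
    subst this
    simp

lemma stay_in {X S : Set V} (hcross : ∀ ⦃x y⦄, x ∈ X → y ∉ X → G.Adj x y → x ∈ S) :
    ∀ {x b : V} (w : G.Walk x b), w.IsPath → x ∈ X →
      (∀ z ∈ w.support, z ∈ S → z = b) → ∀ z ∈ w.support, z ∈ X := by
  intro x b w
  induction w with
  | nil => intro _ hx _ z hz; simp at hz; subst hz; exact hx
  | @cons u y e h w' ih =>
    intro hw hx hS z hz
    rw [Walk.support_cons, List.mem_cons] at hz
    rcases hz with rfl | hz
    · exact hx
    · have hy : y ∈ X := by
        by_contra hy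
        have hu : u ∈ S := hcross hx hy h
        have hub : u = e := hS u (Walk.start_mem_support _) hu
        subst hub
        have : u ∉ w'.support := by
          have := hw.support_nodup
          simp only [Walk.support_cons, List.nodup_cons] at this
          exact this.1
        exact this (Walk.end_mem_support _)
      exact ih hw.of_cons hy (fun z hz => hS z (by simp [hz])) z hz

lemma stay_in' {Y S : Set V} (hcross : ∀ ⦃x y⦄, x ∈ Y → y ∉ Y → G.Adj x y → y ∈ S) :
    ∀ {x b : V} (w : G.Walk x b), w.IsPath → x ∈ Y →
      (∀ z ∈ w.support, z ∈ S → z = b) → ∀ z ∈ w.support, z ≠ b → z ∈ Y := by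
  intro x b w
  induction w with
  | nil => intro _ hx _ z hz hzb; simp at hz; exact absurd hz hzb
  | @cons u y e h w' ih =>
    intro hw hx hS z hz hzb
    rw [Walk.support_cons, List.mem_cons] at hz
    rcases hz with rfl | hz
    · exact hx
    · by_cases hy : y ∈ Y
      · exact ih hw.of_cons hy (fun z hz => hS z (by simp [hz])) z hz hzb
      · have hyS : y ∈ S := hcross hx hy h
        have hyb : y = e := hS y (by simp) hyS
        subst hyb
        have : w' = Walk.nil := Walk.isPath_iff_eq_nil.mp hw.of_cons
        subst this
        simp at hz
        exact absurd hz hzb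

/-- Structure of a cross path: either it stays on its own side, or its interior is a pure
cross path of the other side. -/
lemma cross_decomp {X Y A B A' B' : Set V}
    (hXY : ∀ z : V, z ∈ X ∨ z ∈ Y)
    (hd : ∀ ⦃z⦄, z ∈ X → z ∈ Y → False)
    (hAX : A ⊆ X) (hBX : B ⊆ X)
    (hABd : ∀ ⦃z⦄, z ∈ A → z ∈ B → False)
    (hAA' : ∀ a ∈ A, ∀ a' ∈ A', G.Adj a a')
    (hBB' : ∀ b ∈ B, ∀ b' ∈ B', G.Adj b b')
    (hcr : ∀ ⦃x y⦄, x ∈ X → y ∈ Y → G.Adj x y → (x ∈ A ∧ y ∈ A') ∨ (x ∈ B ∧ y ∈ B'))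
    {u v : V} {p : G.Walk u v} (hp : BSP.CrossPath G A B p) :
    (∀ z ∈ p.support, z ∈ X) ∨
      (∃ (a b : V) (q : G.Walk a b), BSP.CrossPath G A' B' q ∧
        (∀ z ∈ q.support, z ∈ Y) ∧ q.length + 2 = p.length) := by
  obtain ⟨⟨hpath, hind⟩, hu, hv, hint⟩ := hp
  have huv : u ≠ v := fun h => hABd hu (h ▸ hv)
  cases p with
  | nil => exact absurd rfl huv
  | cons h t =>
    rename_i x
    have hunotm : u ∉ t.support := by
      have := hpath.support_nodup
      simp only [Walk.support_cons, List.nodup_cons] at this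
      exact this.1
    have hypAB : ∀ z ∈ t.support, z ∈ A ∪ B → z = v := by
      intro z hz hzAB
      by_contra hzv
      exact hint z ⟨by simp [hz], fun he => hunotm (he ▸ hz), hzv⟩ hzAB
    by_cases hx : x ∈ X
    · left
      have hsub := stay_in (S := A ∪ B)
        (fun x' y' hx' hy' hadj => by
          rcases hcr hx' ((hXY y').resolve_left hy') hadj with ⟨h1, _⟩ | ⟨h1, _⟩
          · exact Or.inl h1
          · exact Or.inr h1)
        t hpath.of_cons hx hypAB
      intro z hz
      rw [Walk.support_cons, List.mem_cons] at hz
      rcases hz with rfl | hz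
      · exact hAX hu
      · exact hsub z hz
    · right
      have hxY : x ∈ Y := (hXY x).resolve_left hx
      have hxA' : x ∈ A' := by
        rcases hcr (hAX hu) hxY h with ⟨_, h2⟩ | ⟨h1, _⟩
        · exact h2
        · exact (hABd hu h1).elim
      have hstay : ∀ z ∈ t.support, z ≠ v → z ∈ Y :=
        stay_in' (S := A ∪ B)
          (fun x' y' hx' hy' hadj => by
            have hy'X : y' ∈ X := (hXY y').resolve_right hy'
            rcases hcr hy'X hx' hadj.symm with ⟨h1, _⟩ | ⟨h1, _⟩
            · exact Or.inl h1
            · exact Or.inr h1)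
          t hpath.of_cons hxY hypAB
      have hxv : x ≠ v := fun he => hd (hBX hv) (he ▸ hxY)
      obtain ⟨y, q, h2, ht⟩ := exists_eq_concat t hxv
      subst ht
      have htsup : (q.concat h2).support = q.support ++ [v] := by
        rw [Walk.support_concat]
      have hvq : v ∉ q.support := by
        have := hpath.of_cons.support_nodup
        rw [htsup] at this
        have := List.disjoint_of_nodup_append this
        intro hc
        exact this hc (by simp)
      have hqY : ∀ z ∈ q.support, z ∈ Y := by
        intro z hz
        exact hstay z (by rw [htsup]; simp [hz]) (fun he => hvq (he ▸ hz))
      have hyB' : y ∈ B' := by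
        rcases hcr (hBX hv) (hqY y (Walk.end_mem_support _)) h2.symm with ⟨h1, _⟩ | ⟨_, h3⟩
        · exact (hABd h1 hv).elim
        · exact h3
      have hqpath : q.IsPath := by
        rw [Walk.isPath_def]
        have := hpath.of_cons.support_nodup
        rw [htsup] at this
        exact this.of_append_left
      have hedges : (Walk.cons h (q.concat h2)).edges
          = s(u, x) :: (q.edges ++ [s(y, v)]) := by
        rw [Walk.edges_cons, Walk.edges_concat, List.concat_eq_append]
      have husup : u ∉ q.support := fun hc =>
        hunotm (by rw [htsup]; simp [hc])
      have hqind : BSP.IsInducedWalk G q := by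
        intro z hz w hw hadj
        have hzp : z ∈ (Walk.cons h (q.concat h2)).support := by
          rw [Walk.support_cons, htsup]; simp [hz]
        have hwp : w ∈ (Walk.cons h (q.concat h2)).support := by
          rw [Walk.support_cons, htsup]; simp [hw]
        have := hind z hzp w hwp hadj
        rw [hedges, List.mem_cons, List.mem_append] at this
        rcases this with he | he | he
        · rw [Sym2.eq_iff] at he
          rcases he with ⟨h1, _⟩ | ⟨_, h1⟩
          · exact absurd (h1 ▸ hz) husup
          · exact absurd (h1 ▸ hw) husup
        · exact he
        · simp only [List.mem_singleton] at he
          rw [Sym2.eq_iff] at he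
          rcases he with ⟨_, h1⟩ | ⟨h1, _⟩
          · exact absurd (h1 ▸ hw) hvq
          · exact absurd (h1 ▸ hz) hvq
      have hqint : ∀ z, BSP.Interior q z → z ∉ A' ∪ B' := by
        rintro z ⟨hzs, hzx, hzy⟩ hzAB
        rcases hzAB with hzA' | hzB'
        · have hadj : G.Adj u z := hAA' u hu z hzA'
          have h1 : s(u, z) ∈ (Walk.cons h (q.concat h2)).edges :=
            hind u (by simp) z (by rw [Walk.support_cons, htsup]; simp [hzs]) hadj
          have h0 : s(u, x) ∈ (Walk.cons h (q.concat h2)).edges := by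
            rw [hedges]; simp
          exact hzx (edge_from_start hpath h1 h0)
        · have hadj : G.Adj v z := hBB' v hv z hzB'
          have h1 : s(v, z) ∈ (Walk.cons h (q.concat h2)).edges :=
            hind v (by simp) z (by rw [Walk.support_cons, htsup]; simp [hzs]) hadj
          have h0 : s(v, y) ∈ (Walk.cons h (q.concat h2)).edges := by
            rw [hedges, Sym2.eq_swap]; simp
          exact hzy (edge_from_end hpath h1 h0)
      refine ⟨x, y, q, ⟨⟨hqpath, hqind⟩, hxA', hyB', hqint⟩, hqY, ?_⟩
      simp only [Walk.length_cons, Walk.length_concat]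

lemma cross_parity {X Y A B A' B' : Set V}
    (hBerge : ¬ BSP.HasOddHole G)
    (hd : ∀ ⦃z⦄, z ∈ X → z ∈ Y → False)
    (hAX : A ⊆ X) (hBX : B ⊆ X) (hA'Y : A' ⊆ Y) (hB'Y : B' ⊆ Y)
    (hABd : ∀ ⦃z⦄, z ∈ A → z ∈ B → False)
    (hA'B'd : ∀ ⦃z⦄, z ∈ A' → z ∈ B' → False)
    (hAA' : ∀ a ∈ A, ∀ a' ∈ A', G.Adj a a')
    (hBB' : ∀ b ∈ B, ∀ b' ∈ B', G.Adj b b')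
    (hcr : ∀ ⦃x y⦄, x ∈ X → y ∈ Y → G.Adj x y → (x ∈ A ∧ y ∈ A') ∨ (x ∈ B ∧ y ∈ B'))
    {a1 b1 a2 b2 : V} {p : G.Walk a1 b1} {q : G.Walk a2 b2}
    (hp : BSP.CrossPath G A B p) (hpX : ∀ z ∈ p.support, z ∈ X)
    (hq : BSP.CrossPath G A' B' q) (hqY : ∀ z ∈ q.support, z ∈ Y) :
    Even (p.length + q.length) := by
  obtain ⟨⟨hppath, hpind⟩, ha1, hb1, hpint⟩ := hp
  obtain ⟨⟨hqpath, hqind⟩, ha2, hb2, hqint⟩ := hq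
  by_contra hodd
  rw [Nat.not_even_iff_odd] at hodd
  obtain ⟨k, hk⟩ := hodd
  have hpne : a1 ≠ b1 := fun h => hABd ha1 (h ▸ hb1)
  have hqne : a2 ≠ b2 := fun h => hA'B'd ha2 (h ▸ hb2)
  have hplen : 1 ≤ p.length := by
    rcases Nat.eq_zero_or_pos p.length with h | h
    · exact absurd (Walk.eq_of_length_eq_zero h) hpne
    · exact h
  have hqlen : 1 ≤ q.length := by
    rcases Nat.eq_zero_or_pos q.length with h | h
    · exact absurd (Walk.eq_of_length_eq_zero h) hqne
    · exact h
  have hb12 : G.Adj b1 b2 := hBB' _ hb1 _ hb2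
  have ha21 : G.Adj a2 a1 := (hAA' _ ha1 _ ha2).symm
  set c : G.Walk a1 a1 :=
    p.append (Walk.cons hb12 (q.reverse.append (Walk.cons ha21 Walk.nil))) with hc
  have hQsup : ∀ z ∈ q.reverse.support, z ∈ q.support := by
    intro z hz; rwa [Walk.support_reverse, List.mem_reverse] at hz
  have honlyA : ∀ z ∈ p.support, z ∈ A → z = a1 := by
    intro z hz hzA
    by_contra hne
    by_cases hzb : z = b1
    · exact hABd (hzb ▸ hzA) hb1
    · exact (hpint z ⟨hz, hne, hzb⟩) (Or.inl hzA)
  have honlyB : ∀ z ∈ p.support, z ∈ B → z = b1 := by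
    intro z hz hzB
    by_contra hne
    by_cases hza : z = a1
    · exact hABd (hza ▸ ha1) (hza ▸ hzB)
    · exact (hpint z ⟨hz, hza, hne⟩) (Or.inr hzB)
  have honlyA' : ∀ z ∈ q.support, z ∈ A' → z = a2 := by
    intro z hz hzA
    by_contra hne
    by_cases hzb : z = b2
    · exact hA'B'd (hzb ▸ hzA) hb2
    · exact (hqint z ⟨hz, hne, hzb⟩) (Or.inl hzA)
  have honlyB' : ∀ z ∈ q.support, z ∈ B' → z = b2 := by
    intro z hz hzB
    by_contra hne
    by_cases hza : z = a2
    · exact hA'B'd (hza ▸ ha2) (hza ▸ hzB)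
    · exact (hqint z ⟨hz, hza, hne⟩) (Or.inr hzB)
  have hcsup : c.support = p.support ++ (q.reverse.support ++ [a1]) := by
    simp only [hc, Walk.support_append, Walk.support_cons, Walk.support_nil, List.tail_cons]
  have htail : c.support.tail = p.support.tail ++ (q.reverse.support ++ [a1]) := by
    rw [hc, Walk.tail_support_append]
    congr 1
    simp only [Walk.support_cons, List.tail_cons, Walk.support_append, Walk.support_nil]
  have hcedges : c.edges = p.edges ++ (s(b1, b2) :: (q.reverse.edges ++ [s(a2, a1)])) := by
    simp only [hc, Walk.edges_append, Walk.edges_cons, Walk.edges_nil]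
  have hlen : c.length = p.length + q.length + 2 := by
    simp only [hc, Walk.length_append, Walk.length_cons, Walk.length_reverse, Walk.length_nil]
    omega
  have hmem : ∀ z ∈ c.support, z ∈ p.support ∨ z ∈ q.support := by
    intro z hz
    rw [hcsup, List.mem_append, List.mem_append] at hz
    rcases hz with hz | hz | hz
    · exact Or.inl hz
    · exact Or.inr (hQsup z hz)
    · simp only [List.mem_singleton] at hz
      exact Or.inl (hz ▸ Walk.start_mem_support p)
  have hmemc : ∀ {e : Sym2 V}, e ∈ p.edges ++ (s(b1, b2) :: (q.reverse.edges ++ [s(a2, a1)]))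
      → e ∈ c.edges := by
    rw [hcedges]; exact fun he => he
  have hcind : BSP.IsInducedWalk G c := by
    intro z hz w hw hadj
    have hmq : ∀ {x y : V}, s(x, y) ∈ q.edges → s(x, y) ∈ c.edges := by
      intro x y hxy
      have hrev : s(x, y) ∈ q.reverse.edges := by
        rw [Walk.edges_reverse, List.mem_reverse]; exact hxy
      exact hmemc (List.mem_append_right _ (List.mem_cons_of_mem _ (List.mem_append_left _ hrev)))
    have hcross : ∀ {x y : V}, x ∈ p.support → y ∈ q.support → G.Adj x y →
        s(x, y) ∈ c.edges := by
      intro x y hx hy hxy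
      rcases hcr (hpX x hx) (hqY y hy) hxy with ⟨h1, h2⟩ | ⟨h1, h2⟩
      · have e1 := honlyA x hx h1
        have e2 := honlyA' y hy h2
        subst e1; subst e2
        rw [Sym2.eq_swap]
        exact hmemc (List.mem_append_right _ (List.mem_cons_of_mem _
          (List.mem_append_right _ (List.mem_singleton_self _))))
      · have e1 := honlyB x hx h1
        have e2 := honlyB' y hy h2
        subst e1; subst e2
        exact hmemc (List.mem_append_right _ List.mem_cons_self)
    rcases hmem z hz with hzp | hzq <;> rcases hmem w hw with hwp | hwq
    · exact hmemc (List.mem_append_left _ (hpind z hzp w hwp hadj))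
    · exact hcross hzp hwq hadj
    · have := hcross hwp hzq hadj.symm
      rwa [Sym2.eq_swap]
    · exact hmq (hqind z hzq w hwq hadj)
  have ha1q : a1 ∉ q.support := fun h => hd (hAX ha1) (hqY a1 h)
  have ha2p : a2 ∉ p.support := fun h => hd (hpX a2 h) (hA'Y ha2)
  have hb1q : b1 ∉ q.support := fun h => hd (hBX hb1) (hqY b1 h)
  have hb2p : b2 ∉ p.support := fun h => hd (hpX b2 h) (hB'Y hb2)
  have ha1tail : a1 ∉ p.support.tail := by
    have := hppath.support_nodup
    rw [Walk.support_eq_cons] at this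
    exact (List.nodup_cons.mp this).1
  have htailnd : c.support.tail.Nodup := by
    rw [htail, List.nodup_append]
    refine ⟨(List.nodup_cons.mp ((Walk.support_eq_cons p) ▸ hppath.support_nodup)).2, ?_, ?_⟩
    · rw [List.nodup_append]
      refine ⟨hqpath.reverse.support_nodup, List.nodup_singleton _, ?_⟩
      intro x hx y hy hx1
      simp only [List.mem_singleton] at hy
      subst hy; subst hx1
      exact ha1q (hQsup _ hx)
    · intro x hx y hx2 hxy
      subst hxy
      have hxp : x ∈ p.support := List.mem_of_mem_tail hx
      rw [List.mem_append] at hx2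
      rcases hx2 with hx2 | hx2
      · exact hd (hpX x hxp) (hqY x (hQsup x hx2))
      · simp only [List.mem_singleton] at hx2
        exact ha1tail (hx2 ▸ hx)
  have hedgend : c.edges.Nodup := by
    rw [hcedges, List.nodup_append]
    refine ⟨hppath.isTrail.edges_nodup, ?_, ?_⟩
    · rw [List.nodup_cons, List.nodup_append]
      refine ⟨?_, hqpath.reverse.isTrail.edges_nodup, List.nodup_singleton _, ?_⟩
      · intro hcon
        rw [List.mem_append] at hcon
        rcases hcon with hcon | hcon
        · exact hb1q (hQsup _ (Walk.fst_mem_support_of_mem_edges _ hcon))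
        · simp only [List.mem_singleton, Sym2.eq_iff] at hcon
          rcases hcon with ⟨e1, e2⟩ | ⟨e1, e2⟩
          · exact hd (hBX hb1) (hA'Y (e1 ▸ ha2))
          · exact hpne (e1.symm ▸ rfl)
      · intro e he e' hes hee
        simp only [List.mem_singleton] at hes
        subst hes; subst hee
        exact ha1q (hQsup _ (Walk.snd_mem_support_of_mem_edges _ he))
    · intro e he e' hes hee
      subst hee
      induction e with
      | h x y =>
        have hxp : x ∈ p.support := Walk.fst_mem_support_of_mem_edges _ he
        simp only [List.mem_cons, List.mem_append, List.mem_singleton] at hes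
        rcases hes with hes | hes | hes
        · rw [Sym2.eq_iff] at hes
          rcases hes with ⟨e1, e2⟩ | ⟨e3, e4⟩
          · exact hb2p (by rw [← e2]; exact Walk.snd_mem_support_of_mem_edges _ he)
          · exact hb2p (by rw [← e3]; exact hxp)
        · exact hd (hpX x hxp) (hqY x (hQsup _ (Walk.fst_mem_support_of_mem_edges _ hes)))
        · rw [Sym2.eq_iff] at hes
          rcases hes with (⟨e1, e2⟩ | ⟨e3, e4⟩) | hemp
          · exact ha2p (by rw [← e1]; exact hxp)
          · exact ha2p (by rw [← e4]; exact Walk.snd_mem_support_of_mem_edges _ he)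
          · simp at hemp
  have hcne : c ≠ Walk.nil := by
    intro h
    have : c.length = 0 := by rw [h]; rfl
    omega
  have hcyc : c.IsCycle := by
    rw [Walk.isCycle_def]
    exact ⟨⟨hedgend⟩, hcne, htailnd⟩
  exact hBerge ⟨a1, c, ⟨hcyc, hcind⟩, ⟨k + 1, by omega⟩, by omega⟩

lemma exists_pure_cross {X A B : Set V} (hA : A.Nonempty)
    (hABd : ∀ ⦃z⦄, z ∈ A → z ∈ B → False) (hAX : A ⊆ X)
    (hSC : BSP.SideConnected G X A B) :
    ∃ (a b : V) (p : G.Walk a b), BSP.CrossPath G A B p ∧ ∀ z ∈ p.support, z ∈ X := by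
  classical
  obtain ⟨a0, ha0⟩ := hA
  obtain ⟨-, hreach⟩ := hSC a0 (hAX ha0)
  obtain ⟨b0, hb0, w0, hw0⟩ := hreach
  have hS : ∃ n, ∃ (a b : V), a ∈ A ∧ b ∈ B ∧ ∃ (w : G.Walk a b),
      (∀ z ∈ w.support, z ∈ X) ∧ w.length = n :=
    ⟨w0.length, a0, b0, ha0, hb0, w0, hw0, rfl⟩
  set n0 := Nat.find hS with hn0
  obtain ⟨a, b, ha, hb, w, hwX, hwlen⟩ := Nat.find_spec hS
  have hmin : ∀ (a' b' : V), a' ∈ A → b' ∈ B → ∀ (w' : G.Walk a' b'),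
      (∀ z ∈ w'.support, z ∈ X) → n0 ≤ w'.length := by
    intro a' b' ha' hb' w' hX'
    by_contra hlt
    push_neg at hlt
    exact Nat.find_min hS hlt ⟨a', b', ha', hb', w', hX', rfl⟩
  set p := w.bypass with hpdef
  have hppath : p.IsPath := w.bypass_isPath
  have hpX : ∀ z ∈ p.support, z ∈ X := fun z hz => hwX z (w.support_bypass_subset hz)
  have hplen : p.length = n0 := by
    refine le_antisymm ?_ (hmin a b ha hb p hpX)
    rw [hn0, ← hwlen]
    exact w.length_bypass_le
  have hintA : ∀ z, BSP.Interior p z → z ∉ A := by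
    rintro z ⟨hzs, hza, hzb⟩ hzA
    have hX' : ∀ x ∈ (p.dropUntil z hzs).support, x ∈ X :=
      fun x hx => hpX x (Walk.support_dropUntil_subset _ _ hx)
    have hge := hmin z b hzA hb _ hX'
    have hsum : (p.takeUntil z hzs).length + (p.dropUntil z hzs).length = p.length := by
      have := congrArg Walk.length (p.take_spec hzs)
      rwa [Walk.length_append] at this
    have htne : (p.takeUntil z hzs).length ≠ 0 :=
      fun h => hza (Walk.eq_of_length_eq_zero h).symm
    omega
  have hintB : ∀ z, BSP.Interior p z → z ∉ B := by
    rintro z ⟨hzs, hza, hzb⟩ hzB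
    have hX' : ∀ x ∈ (p.takeUntil z hzs).support, x ∈ X :=
      fun x hx => hpX x (Walk.support_takeUntil_subset _ _ hx)
    have hge := hmin a z ha hzB _ hX'
    have hsum : (p.takeUntil z hzs).length + (p.dropUntil z hzs).length = p.length := by
      have := congrArg Walk.length (p.take_spec hzs)
      rwa [Walk.length_append] at this
    have hdne : (p.dropUntil z hzs).length ≠ 0 :=
      fun h => hzb (Walk.eq_of_length_eq_zero h)
    omega
  have hind : BSP.IsInducedWalk G p := by
    intro x hx y hy hadj
    by_contra hne
    have hy' : y ∈ (p.takeUntil x hx).support ∨ y ∈ (p.dropUntil x hx).support := by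
      rw [← Walk.mem_support_append_iff, p.take_spec hx]
      exact hy
    have hsum : (p.takeUntil x hx).length + (p.dropUntil x hx).length = p.length := by
      have := congrArg Walk.length (p.take_spec hx)
      rwa [Walk.length_append] at this
    rcases hy' with hy1 | hy2
    · -- y occurs before x
      set t1 := p.takeUntil x hx with ht1
      set t2 := p.dropUntil x hx with ht2
      set w' := (t1.takeUntil y hy1).append (Walk.cons hadj.symm t2) with hw'
      have hX' : ∀ z ∈ w'.support, z ∈ X := by
        intro z hz
        rw [hw', Walk.mem_support_append_iff] at hz
        rcases hz with hz | hz
        · exact hpX z (Walk.support_takeUntil_subset _ _ (Walk.support_takeUntil_subset _ _ hz))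
        · rw [Walk.support_cons, List.mem_cons] at hz
          rcases hz with rfl | hz
          · exact hpX z (Walk.support_takeUntil_subset _ _ hy1)
          · exact hpX z (Walk.support_dropUntil_subset _ _ hz)
      have hge := hmin a b ha hb w' hX'
      have hslen : w'.length = (t1.takeUntil y hy1).length + (1 + t2.length) := by
        rw [hw', Walk.length_append, Walk.length_cons]; omega
      have hsum1 : (t1.takeUntil y hy1).length + (t1.dropUntil y hy1).length = t1.length := by
        have := congrArg Walk.length (t1.take_spec hy1)
        rwa [Walk.length_append] at this
      have hd0 : (t1.dropUntil y hy1).length ≠ 0 := by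
        intro h
        exact hadj.ne (Walk.eq_of_length_eq_zero h).symm
      have hd1 : (t1.dropUntil y hy1).length ≠ 1 := by
        intro h
        have := edge_of_length_one h
        have hmem : s(y, x) ∈ p.edges :=
          Walk.edges_takeUntil_subset _ _ (Walk.edges_dropUntil_subset _ _ this)
        rw [Sym2.eq_swap] at hmem
        exact hne hmem
      omega
    · -- y occurs after x
      set t1 := p.takeUntil x hx with ht1
      set t2 := p.dropUntil x hx with ht2
      set w' := t1.append (Walk.cons hadj (t2.dropUntil y hy2)) with hw'
      have hX' : ∀ z ∈ w'.support, z ∈ X := by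
        intro z hz
        rw [hw', Walk.mem_support_append_iff] at hz
        rcases hz with hz | hz
        · exact hpX z (Walk.support_takeUntil_subset _ _ hz)
        · rw [Walk.support_cons, List.mem_cons] at hz
          rcases hz with rfl | hz
          · exact hpX z hx
          · exact hpX z (Walk.support_dropUntil_subset _ _
              (Walk.support_dropUntil_subset _ _ hz))
      have hge := hmin a b ha hb w' hX'
      have hslen : w'.length = t1.length + (1 + (t2.dropUntil y hy2).length) := by
        rw [hw', Walk.length_append, Walk.length_cons]; omega
      have hsum2 : (t2.takeUntil y hy2).length + (t2.dropUntil y hy2).length = t2.length := by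
        have := congrArg Walk.length (t2.take_spec hy2)
        rwa [Walk.length_append] at this
      have hd0 : (t2.takeUntil y hy2).length ≠ 0 := by
        intro h
        exact hadj.ne (Walk.eq_of_length_eq_zero h)
      have hd1 : (t2.takeUntil y hy2).length ≠ 1 := by
        intro h
        have := edge_of_length_one h
        have hmem : s(x, y) ∈ p.edges :=
          Walk.edges_dropUntil_subset _ _ (Walk.edges_takeUntil_subset _ _ this)
        exact hne hmem
      omega
  refine ⟨a, b, p, ⟨⟨hppath, hind⟩, ha, hb, ?_⟩, hpX⟩
  intro z hz hzU
  rcases hzU with hzA | hzB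
  · exact hintA z hz hzA
  · exact hintB z hz hzB

end BSPAux


/-- In a Berge graph with a connected 2-join, all induced paths from `A1` to `B1`
with no interior vertex in `A1 ∪ B1`, and all induced paths from `A2` to `B2` with no interior
vertex in `A2 ∪ B2`, have lengths of the same parity. -/
theorem connected_two_join_path_parity {V : Type*} (G : SimpleGraph V)
    (X1 X2 A1 B1 A2 B2 : Set V)
    (hBerge : BSP.Berge G)
    (hJ : BSP.IsConnectedTwoJoin G X1 X2 A1 B1 A2 B2) :
    ∀ (u v u' v' : V) (p : G.Walk u v) (q : G.Walk u' v'),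
      (BSP.CrossPath G A1 B1 p ∨ BSP.CrossPath G A2 B2 p) →
      (BSP.CrossPath G A1 B1 q ∨ BSP.CrossPath G A2 B2 q) →
      (Even p.length ↔ Even q.length) := by
  obtain ⟨⟨h1, h2, h3, h4, h5, h6, h7, h8, h9, h10, h11, h12, h13, h14, h15⟩, hSC1, hSC2⟩ := hJ
  have hXY : ∀ z : V, z ∈ X1 ∨ z ∈ X2 := fun z => by
    have : z ∈ X1 ∪ X2 := by rw [h2]; trivial
    exact this
  have hXY' : ∀ z : V, z ∈ X2 ∨ z ∈ X1 := fun z => (hXY z).symm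
  have hd : ∀ ⦃z : V⦄, z ∈ X1 → z ∈ X2 → False :=
    fun z hz1 hz2 => Set.disjoint_left.mp h1 hz1 hz2
  have hd' : ∀ ⦃z : V⦄, z ∈ X2 → z ∈ X1 → False := fun z hz1 hz2 => hd hz2 hz1
  have hABd : ∀ ⦃z : V⦄, z ∈ A1 → z ∈ B1 → False :=
    fun z hz1 hz2 => Set.disjoint_left.mp h7 hz1 hz2
  have hABd' : ∀ ⦃z : V⦄, z ∈ A2 → z ∈ B2 → False :=
    fun z hz1 hz2 => Set.disjoint_left.mp h8 hz1 hz2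
  have hAA'' : ∀ a ∈ A2, ∀ a' ∈ A1, G.Adj a a' := fun a ha a' ha' => (h13 a' ha' a ha).symm
  have hBB'' : ∀ b ∈ B2, ∀ b' ∈ B1, G.Adj b b' := fun b hb b' hb' => (h14 b' hb' b hb).symm
  have hcr : ∀ ⦃x y : V⦄, x ∈ X1 → y ∈ X2 → G.Adj x y →
      (x ∈ A1 ∧ y ∈ A2) ∨ (x ∈ B1 ∧ y ∈ B2) := fun x y hx hy h => h15 x hx y hy h
  have hcr' : ∀ ⦃x y : V⦄, x ∈ X2 → y ∈ X1 → G.Adj x y →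
      (x ∈ A2 ∧ y ∈ A1) ∨ (x ∈ B2 ∧ y ∈ B1) := fun x y hx hy h =>
    (h15 y hy x hx h.symm).imp (fun h' => ⟨h'.2, h'.1⟩) (fun h' => ⟨h'.2, h'.1⟩)
  obtain ⟨pa, pb, p0, hp0, hp0X⟩ := BSPAux.exists_pure_cross h9 hABd h3 hSC1
  obtain ⟨qa, qb, q0, hq0, hq0Y⟩ := BSPAux.exists_pure_cross h11 hABd' h5 hSC2
  have base : Even (p0.length + q0.length) :=
    BSPAux.cross_parity hBerge.1 hd h3 h4 h5 h6 hABd hABd' h13 h14 hcr hp0 hp0X hq0 hq0Y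
  have ebase : Even p0.length ↔ Even q0.length := Nat.even_add.mp base
  have key : ∀ (u v : V) (r : G.Walk u v),
      (BSP.CrossPath G A1 B1 r ∨ BSP.CrossPath G A2 B2 r) →
      (Even r.length ↔ Even p0.length) := by
    intro u v r hr
    rcases hr with hr | hr
    · rcases BSPAux.cross_decomp hXY hd h3 h4 hABd h13 h14 hcr hr with
        hpure | ⟨x, y, q', hq', hq'Y, hq'len⟩
      · have h1e := BSPAux.cross_parity hBerge.1 hd h3 h4 h5 h6 hABd hABd' h13 h14 hcr
          hr hpure hq0 hq0Y
        exact (Nat.even_add.mp h1e).trans ebase.symm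
      · have h1e := BSPAux.cross_parity hBerge.1 hd h3 h4 h5 h6 hABd hABd' h13 h14 hcr
          hp0 hp0X hq' hq'Y
        have e2 : Even p0.length ↔ Even q'.length := Nat.even_add.mp h1e
        have e3 : Even r.length ↔ Even q'.length := by
          rw [← hq'len, Nat.even_add]
          simp
        exact e3.trans e2.symm
    · rcases BSPAux.cross_decomp hXY' hd' h5 h6 hABd' hAA'' hBB'' hcr' hr with
        hpure | ⟨x, y, q', hq', hq'X, hq'len⟩
      · have h1e := BSPAux.cross_parity hBerge.1 hd' h5 h6 h3 h4 hABd' hABd hAA'' hBB'' hcr'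
          hr hpure hp0 hp0X
        exact Nat.even_add.mp h1e
      · have h1e := BSPAux.cross_parity hBerge.1 hd h3 h4 h5 h6 hABd hABd' h13 h14 hcr
          hq' hq'X hq0 hq0Y
        have e1 : Even q'.length ↔ Even q0.length := Nat.even_add.mp h1e
        have e3 : Even r.length ↔ Even q'.length := by
          rw [← hq'len, Nat.even_add]
          simp
        exact e3.trans (e1.trans ebase.symm)
  intro u v u' v' p q hp hq
  exact (key u v p hp).trans (key u' v' q hq).symm
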